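/- Let (Ω, μ) be a probability space, let (ν_m)_{m∈ℕ} be independent complex-valued random variables with E[ν_m] = 0 and E[|ν_m|²] = 1, and let (φ_m)_{m∈ℕ} be complex numbers with |φ_m| = 1. Let κ > 0, P > 0, σ² > 0, and let α₀ : ℕ → ℝ satisfy M·α₀(M)² → 1 as M → ∞. Define the instantaneous SNR isnr_M := (M·α₀(M)²/(1+κ)) · |√κ + (1/M)Σ_{m=0}^{M-1} ν_m conj(φ_m)|² · (P/σ²). Then isnr_M converges in measure (in probability) to (κ/(1+κ))·(P/σ²) as M → ∞. -/

import Mathlib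

open MeasureTheory ProbabilityTheory Finset Filter


lemma second_moment
    {Ω : Type*} [MeasurableSpace Ω] (μ : Measure Ω) [IsProbabilityMeasure μ]
    (ν : ℕ → Ω → ℂ) (φ : ℕ → ℂ)
    (hmeas : ∀ m, Measurable (ν m))
    (hindep : iIndepFun ν μ)
    (hL2 : ∀ m, MemLp (ν m) 2 μ)
    (hmean : ∀ m, ∫ ω, ν m ω ∂μ = 0)
    (hvar : ∀ m, ∫ ω, ‖ν m ω‖ ^ 2 ∂μ = 1)
    (hφ : ∀ m, ‖φ m‖ = 1) (M : ℕ) :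
    ∫ ω, ‖∑ m ∈ Finset.range M, ν m ω * (starRingEnd ℂ) (φ m)‖ ^ 2 ∂μ = M := by
  classical
  set X : ℕ → Ω → ℂ := fun m ω => ν m ω * (starRingEnd ℂ) (φ m) with hX
  have hXL2 : ∀ m, MemLp (X m) 2 μ := by
    intro m
    simpa [X, mul_comm] using (hL2 m).const_mul ((starRingEnd ℂ) (φ m))
  have hXint : ∀ m, ∫ ω, X m ω ∂μ = 0 := by
    intro m
    simp only [X]
    rw [integral_mul_const, hmean m, zero_mul]
  set R : ℕ → Ω → ℝ := fun m ω => (X m ω).re with hRdef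
  set I : ℕ → Ω → ℝ := fun m ω => (X m ω).im with hIdef
  have hRL2 : ∀ m, MemLp (R m) 2 μ := fun m => by simpa using (hXL2 m).re
  have hIL2 : ∀ m, MemLp (I m) 2 μ := fun m => by simpa using (hXL2 m).im
  have hRint : ∀ m, ∫ ω, R m ω ∂μ = 0 := by
    intro m
    have := integral_re ((hXL2 m).integrable one_le_two) (f := X m)
    simpa [hXint m] using this
  have hIint : ∀ m, ∫ ω, I m ω ∂μ = 0 := by
    intro m
    have := integral_im ((hXL2 m).integrable one_le_two) (f := X m)
    simpa [hXint m] using this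
  have keyR : ∫ ω, (∑ m ∈ Finset.range M, R m ω) ^ 2 ∂μ
      = ∑ m ∈ Finset.range M, ∫ ω, (R m ω) ^ 2 ∂μ := by
    have hpairR : Set.Pairwise ↑(Finset.range M) (fun i j => IndepFun (R i) (R j) μ) := by
      intro i _ j _ hij
      exact (hindep.indepFun hij).comp
        (Complex.measurable_re.comp (measurable_mul_const _))
        (Complex.measurable_re.comp (measurable_mul_const _))
    have hvarsum : variance (∑ m ∈ Finset.range M, R m) μ
        = ∑ m ∈ Finset.range M, variance (R m) μ :=
      IndepFun.variance_sum (fun m _ => hRL2 m) hpairR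
    have hsumint : ∫ ω, (∑ m ∈ Finset.range M, R m ω) ∂μ = 0 := by
      rw [integral_finset_sum _ (fun m _ => (hRL2 m).integrable one_le_two)]
      simp [hRint]
    have hvarR : ∀ m, variance (R m) μ = ∫ ω, (R m ω) ^ 2 ∂μ := by
      intro m
      rw [variance_eq_sub (hRL2 m), hRint m]
      simp
    have h2 := variance_eq_sub (memLp_finset_sum' (Finset.range M) (fun m _ => hRL2 m)) (μ := μ)
    simp only [Pi.pow_apply, Finset.sum_apply] at h2
    rw [hsumint] at h2
    rw [h2] at hvarsum
    simp only [hvarR] at hvarsum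
    linarith [hvarsum]
  have keyI : ∫ ω, (∑ m ∈ Finset.range M, I m ω) ^ 2 ∂μ
      = ∑ m ∈ Finset.range M, ∫ ω, (I m ω) ^ 2 ∂μ := by
    have hpairI : Set.Pairwise ↑(Finset.range M) (fun i j => IndepFun (I i) (I j) μ) := by
      intro i _ j _ hij
      exact (hindep.indepFun hij).comp
        (Complex.measurable_im.comp (measurable_mul_const _))
        (Complex.measurable_im.comp (measurable_mul_const _))
    have hvarsum : variance (∑ m ∈ Finset.range M, I m) μ
        = ∑ m ∈ Finset.range M, variance (I m) μ :=
      IndepFun.variance_sum (fun m _ => hIL2 m) hpairI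
    have hsumint : ∫ ω, (∑ m ∈ Finset.range M, I m ω) ∂μ = 0 := by
      rw [integral_finset_sum _ (fun m _ => (hIL2 m).integrable one_le_two)]
      simp [hIint]
    have hvarI : ∀ m, variance (I m) μ = ∫ ω, (I m ω) ^ 2 ∂μ := by
      intro m
      rw [variance_eq_sub (hIL2 m), hIint m]
      simp
    have h2 := variance_eq_sub (memLp_finset_sum' (Finset.range M) (fun m _ => hIL2 m)) (μ := μ)
    simp only [Pi.pow_apply, Finset.sum_apply] at h2
    rw [hsumint] at h2
    rw [h2] at hvarsum
    simp only [hvarI] at hvarsum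
    linarith [hvarsum]
  -- pointwise decomposition of the squared norm of the sum
  have hpt : ∀ ω, ‖∑ m ∈ Finset.range M, X m ω‖ ^ 2
      = (∑ m ∈ Finset.range M, R m ω) ^ 2 + (∑ m ∈ Finset.range M, I m ω) ^ 2 := by
    intro ω
    rw [← Complex.re_sum, ← Complex.im_sum, Complex.sq_norm,
      Complex.normSq_apply]
    ring
  -- integrability of the squares
  have hRsq : Integrable (fun ω => (∑ m ∈ Finset.range M, R m ω) ^ 2) μ := by
    have := (memLp_finset_sum' (Finset.range M) (fun m _ => hRL2 m)).integrable_sq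
    simpa [Pi.pow_apply, Finset.sum_apply] using this
  have hIsq : Integrable (fun ω => (∑ m ∈ Finset.range M, I m ω) ^ 2) μ := by
    have := (memLp_finset_sum' (Finset.range M) (fun m _ => hIL2 m)).integrable_sq
    simpa [Pi.pow_apply, Finset.sum_apply] using this
  calc ∫ ω, ‖∑ m ∈ Finset.range M, X m ω‖ ^ 2 ∂μ
      = ∫ ω, ((∑ m ∈ Finset.range M, R m ω) ^ 2 + (∑ m ∈ Finset.range M, I m ω) ^ 2) ∂μ := by
        exact integral_congr_ae (Filter.Eventually.of_forall (fun ω => hpt ω))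
    _ = ∫ ω, (∑ m ∈ Finset.range M, R m ω) ^ 2 ∂μ
        + ∫ ω, (∑ m ∈ Finset.range M, I m ω) ^ 2 ∂μ := integral_add hRsq hIsq
    _ = ∑ m ∈ Finset.range M, (∫ ω, (R m ω) ^ 2 ∂μ + ∫ ω, (I m ω) ^ 2 ∂μ) := by
        rw [keyR, keyI, Finset.sum_add_distrib]
    _ = ∑ m ∈ Finset.range M, (1 : ℝ) := by
        refine Finset.sum_congr rfl (fun m _ => ?_)
        have hsq : Integrable (fun ω => (R m ω) ^ 2) μ := by
          simpa [Pi.pow_apply] using (hRL2 m).integrable_sq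
        have hsq' : Integrable (fun ω => (I m ω) ^ 2) μ := by
          simpa [Pi.pow_apply] using (hIL2 m).integrable_sq
        rw [← integral_add hsq hsq']
        have : ∀ ω, (R m ω) ^ 2 + (I m ω) ^ 2 = ‖ν m ω‖ ^ 2 := by
          intro ω
          have h9 : (R m ω) ^ 2 + (I m ω) ^ 2 = ‖X m ω‖ ^ 2 := by
            simp only [hRdef, hIdef]
            rw [Complex.sq_norm, Complex.normSq_apply]
            ring
          rw [h9]
          simp only [X, norm_mul, RCLike.norm_conj, hφ m, mul_one]
        rw [integral_congr_ae (Filter.Eventually.of_forall this), hvar m]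
    _ = M := by simp


set_option maxHeartbeats 1000000 in
/-- Theorem 1 of the paper: in the stationary Rician channel with constant
path-loss `α₀(M)` satisfying the free-space normalization `M·α₀(M)² → 1`,
the instantaneous SNR of LoS-based beamforming converges in probability to
`(κ/(1+κ))·(P/σ²)` as the number of antennas `M → ∞`. -/

theorem isnr_tendsto_in_measure
    {Ω : Type*} [MeasurableSpace Ω] (μ : Measure Ω) [IsProbabilityMeasure μ]
    (ν : ℕ → Ω → ℂ) (φ : ℕ → ℂ)
    (hmeas : ∀ m, Measurable (ν m))
    (hindep : iIndepFun ν μ)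
    (hL2 : ∀ m, MemLp (ν m) 2 μ)
    (hmean : ∀ m, ∫ ω, ν m ω ∂μ = 0)
    (hvar : ∀ m, ∫ ω, ‖ν m ω‖ ^ 2 ∂μ = 1)
    (hφ : ∀ m, ‖φ m‖ = 1)
    (κ P σ2 : ℝ) (hκ : 0 < κ) (hP : 0 < P) (hσ2 : 0 < σ2)
    (α₀ : ℕ → ℝ)
    (hα₀ : Tendsto (fun M : ℕ => (M : ℝ) * (α₀ M) ^ 2) atTop (nhds 1))
    (isnr : ℕ → Ω → ℝ)
    (hisnr : ∀ M ω, isnr M ω =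
      ((M : ℝ) * (α₀ M) ^ 2 / (1 + κ)) *
        ‖(Real.sqrt κ : ℂ) +
          (M : ℂ)⁻¹ * ∑ m ∈ Finset.range M, ν m ω * (starRingEnd ℂ) (φ m)‖ ^ 2 *
        (P / σ2)) :
    TendstoInMeasure μ isnr atTop (fun _ => (κ / (1 + κ)) * (P / σ2)) := by
  classical
  have hmoment : ∀ M : ℕ,
      ∫ ω, ‖∑ m ∈ Finset.range M, ν m ω * (starRingEnd ℂ) (φ m)‖ ^ 2 ∂μ = M := fun M =>
    second_moment μ ν φ hmeas hindep hL2 hmean hvar hφ M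
  set S : ℕ → Ω → ℂ :=
    fun M ω => (M : ℂ)⁻¹ * ∑ m ∈ Finset.range M, ν m ω * (starRingEnd ℂ) (φ m) with hSdef
  have hκ1 : (0:ℝ) < 1 + κ := by linarith
  set c : ℝ := (P / σ2) / (1 + κ) with hcdef
  have hc : 0 < c := div_pos (div_pos hP hσ2) hκ1
  -- MemLp of S
  have hmemS : ∀ M, MemLp (S M) 2 μ := by
    intro M
    have hterm : ∀ m, MemLp (fun ω => ν m ω * (starRingEnd ℂ) (φ m)) 2 μ := fun m => by
      simpa [mul_comm] using (hL2 m).const_mul ((starRingEnd ℂ) (φ m))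
    have := (memLp_finset_sum' (Finset.range M) (fun m (_ : m ∈ Finset.range M) => hterm m)).const_mul
      ((M : ℂ)⁻¹)
    simpa [hSdef, Finset.sum_apply] using this
  have hSIntSq : ∀ M, Integrable (fun ω => ‖S M ω‖ ^ 2) μ := by
    intro M
    simpa [Pi.pow_apply] using ((hmemS M).norm).integrable_sq
  -- second moment of S
  have hSmom : ∀ M : ℕ, 1 ≤ M → ∫ ω, ‖S M ω‖ ^ 2 ∂μ = (M : ℝ)⁻¹ := by
    intro M hM
    have hpt : ∀ ω, ‖S M ω‖ ^ 2
        = ((M : ℝ)⁻¹) ^ 2 * ‖∑ m ∈ Finset.range M, ν m ω * (starRingEnd ℂ) (φ m)‖ ^ 2 := by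
      intro ω
      rw [hSdef]
      simp only [norm_mul, mul_pow, norm_inv, Complex.norm_natCast]
    rw [integral_congr_ae (Filter.Eventually.of_forall hpt), integral_const_mul, hmoment M]
    have hM0 : (M : ℝ) ≠ 0 := by positivity
    field_simp
  -- Chebyshev
  have hcheb : ∀ δ : ℝ, 0 < δ → ∀ M : ℕ, 1 ≤ M →
      μ {ω | δ ≤ ‖S M ω‖} ≤ ENNReal.ofReal ((M : ℝ)⁻¹ / δ ^ 2) := by
    intro δ hδ M hM
    have h1 : {ω | δ ≤ ‖S M ω‖} = {ω | δ ^ 2 ≤ ‖S M ω‖ ^ 2} := by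
      ext ω
      simp only [Set.mem_setOf_eq]
      constructor
      · intro h; exact pow_le_pow_left₀ hδ.le h 2
      · intro h; nlinarith [norm_nonneg (S M ω)]
    rw [h1]
    have h2 := mul_meas_ge_le_integral_of_nonneg (μ := μ) (f := fun ω => ‖S M ω‖ ^ 2)
      (Filter.Eventually.of_forall fun ω => sq_nonneg _) (hSIntSq M) (δ ^ 2)
    rw [hSmom M hM] at h2
    have hfin : μ {ω | δ ^ 2 ≤ ‖S M ω‖ ^ 2} ≠ ⊤ := measure_ne_top μ _
    have h3 : (μ {ω | δ ^ 2 ≤ ‖S M ω‖ ^ 2}).toReal ≤ (M : ℝ)⁻¹ / δ ^ 2 := by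
      rw [le_div_iff₀ (by positivity)]
      have h2' : δ ^ 2 * (μ {ω | δ ^ 2 ≤ ‖S M ω‖ ^ 2}).toReal ≤ (M : ℝ)⁻¹ := h2
      linarith [h2']
    calc μ {ω | δ ^ 2 ≤ ‖S M ω‖ ^ 2}
        = ENNReal.ofReal (μ {ω | δ ^ 2 ≤ ‖S M ω‖ ^ 2}).toReal := (ENNReal.ofReal_toReal hfin).symm
      _ ≤ ENNReal.ofReal ((M : ℝ)⁻¹ / δ ^ 2) := ENNReal.ofReal_le_ofReal h3
  -- S tends to 0 in measure
  have hSlim : ∀ δ : ℝ, 0 < δ → Tendsto (fun M => μ {ω | δ ≤ ‖S M ω‖}) atTop (nhds 0) := by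
    intro δ hδ
    have hub : Tendsto (fun M : ℕ => ENNReal.ofReal ((M : ℝ)⁻¹ / δ ^ 2)) atTop (nhds 0) := by
      have h4 : Tendsto (fun M : ℕ => (M : ℝ)⁻¹ / δ ^ 2) atTop (nhds 0) := by
        simpa using tendsto_inv_atTop_nhds_zero_nat.div_const (δ ^ 2)
      simpa using ENNReal.tendsto_ofReal h4
    refine tendsto_of_tendsto_of_tendsto_of_le_of_le' tendsto_const_nhds hub
      (Filter.Eventually.of_forall fun M => zero_le) ?_
    filter_upwards [eventually_ge_atTop 1] with M hM
    exact hcheb δ hδ M hM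
  -- the ε-argument
  rw [tendstoInMeasure_iff_dist]
  intro ε hε
  set sqκ : ℝ := Real.sqrt κ with hsqdef
  have hsqpos : 0 < sqκ := Real.sqrt_pos.2 hκ
  have hsqsq : sqκ ^ 2 = κ := Real.sq_sqrt hκ.le
  set δ : ℝ := min 1 (ε / (2 * c * (2 * sqκ + 1))) with hδdef
  have hδpos : 0 < δ := lt_min one_pos (by positivity)
  have hδ1 : δ ≤ 1 := min_le_left _ _
  have hδ2 : c * ((2 * sqκ + 1) * δ) ≤ ε / 2 := by
    have h5 : δ ≤ ε / (2 * c * (2 * sqκ + 1)) := min_le_right _ _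
    have h6 : 0 < 2 * c * (2 * sqκ + 1) := by positivity
    rw [le_div_iff₀ h6] at h5
    nlinarith
  set η : ℝ := ε / (2 * c * (sqκ + 1) ^ 2) with hηdef
  have hηpos : 0 < η := by positivity
  have hη2 : c * ((sqκ + 1) ^ 2 * η) = ε / 2 := by
    rw [hηdef]
    field_simp
  have hev1 : ∀ᶠ M : ℕ in atTop, |(M : ℝ) * (α₀ M) ^ 2 - 1| < η := by
    have := hα₀.eventually (Metric.ball_mem_nhds (1 : ℝ) hηpos)
    simpa [Real.dist_eq] using this
  refine tendsto_of_tendsto_of_tendsto_of_le_of_le' tendsto_const_nhds (hSlim δ hδpos)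
    (Filter.Eventually.of_forall fun M => zero_le) ?_
  filter_upwards [hev1] with M hM
  refine measure_mono ?_
  intro ω hω
  simp only [Set.mem_setOf_eq] at hω ⊢
  by_contra hcon
  push_neg at hcon
  refine absurd hω (not_le.mpr ?_)
  -- pointwise estimate
  set β : ℝ := (M : ℝ) * (α₀ M) ^ 2 with hβdef
  set s : ℝ := ‖S M ω‖ with hsdef
  set n : ℝ := ‖(Real.sqrt κ : ℂ) + S M ω‖ with hndef
  have hn0 : 0 ≤ n := norm_nonneg _
  have hs0 : 0 ≤ s := norm_nonneg _
  have htri : |n - sqκ| ≤ s := by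
    have h7 := abs_norm_sub_norm_le ((Real.sqrt κ : ℂ) + S M ω) ((Real.sqrt κ : ℂ))
    have h8 : ((Real.sqrt κ : ℂ) + S M ω) - (Real.sqrt κ : ℂ) = S M ω := by ring
    rw [h8] at h7
    have h9 : ‖((Real.sqrt κ : ℝ) : ℂ)‖ = sqκ := by
      rw [Complex.norm_real, Real.norm_eq_abs, abs_of_nonneg (Real.sqrt_nonneg κ)]
    rw [h9] at h7
    exact h7
  have hdist : dist (isnr M ω) (κ / (1 + κ) * (P / σ2)) = |c * (β * n ^ 2 - κ)| := by
    rw [Real.dist_eq, hisnr M ω]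
    congr 1
    rw [hcdef, hβdef, hndef]
    field_simp
    rw [show (∑ x ∈ Finset.range M, ν x ω * (starRingEnd ℂ) (φ x)) / (M : ℂ) = S M ω by
      simp only [hSdef]; ring, hsqdef]
  rw [hdist, abs_mul, abs_of_pos hc]
  have hns : n ≤ sqκ + s := by
    cases' abs_le.mp htri with h10 h11
    linarith
  have hnle : n ≤ sqκ + 1 := by linarith
  have hsecond : |n ^ 2 - κ| < (2 * sqκ + 1) * δ := by
    rw [← hsqsq]
    have h12 : n ^ 2 - sqκ ^ 2 = (n - sqκ) * (n + sqκ) := by ring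
    rw [h12, abs_mul]
    have h13 : |n + sqκ| ≤ 2 * sqκ + 1 := by
      rw [abs_of_nonneg (by linarith)]
      linarith
    have h14 : |n - sqκ| < δ := lt_of_le_of_lt htri hcon
    calc |n - sqκ| * |n + sqκ| ≤ |n - sqκ| * (2 * sqκ + 1) :=
          mul_le_mul_of_nonneg_left h13 (abs_nonneg _)
      _ < δ * (2 * sqκ + 1) := by
          apply mul_lt_mul_of_pos_right h14
          linarith
      _ = (2 * sqκ + 1) * δ := by ring
  have hfirst : |β - 1| * n ^ 2 ≤ η * (sqκ + 1) ^ 2 := by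
    have h15 : n ^ 2 ≤ (sqκ + 1) ^ 2 := pow_le_pow_left₀ hn0 hnle 2
    exact mul_le_mul hM.le h15 (sq_nonneg _) hηpos.le
  have hsplit : |β * n ^ 2 - κ| ≤ |β - 1| * n ^ 2 + |n ^ 2 - κ| := by
    have h16 : β * n ^ 2 - κ = (β - 1) * n ^ 2 + (n ^ 2 - κ) := by ring
    rw [h16]
    calc |(β - 1) * n ^ 2 + (n ^ 2 - κ)| ≤ |(β - 1) * n ^ 2| + |n ^ 2 - κ| := abs_add_le _ _
      _ = |β - 1| * n ^ 2 + |n ^ 2 - κ| := by rw [abs_mul, abs_of_nonneg (sq_nonneg n)]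
  have : c * |β * n ^ 2 - κ| ≤ c * (|β - 1| * n ^ 2 + |n ^ 2 - κ|) :=
    mul_le_mul_of_nonneg_left hsplit hc.le
  nlinarith
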